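/- Fix d_A, d_B ≥ 1 and a unit vector ψ ∈ ℂ² ⊗ ℂ^{d_A} ⊗ ℂ^{d_B}. Let V_0, V_1 and V'_0, V'_1 be two pairs of orthogonal projections on ℂ² with V_0 + V_1 = I and V'_0 + V'_1 = I. Let A_0, A_1 be positive semidefinite matrices on ℂ^{d_A} with A_0 + A_1 ⪯ I, and B'_0, B'_1 positive semidefinite matrices on ℂ^{d_B} with B'_0 + B'_1 ⪯ I. Then 2·Σ_{a,b∈{0,1}} ⟨I·A_a·B'_b⟩_ψ ≤ Σ_{a,b∈{0,1}} ⟨(V_a + V'_b)·A_a·B'_b⟩_ψ + ⟨V_1·A_0·I⟩_ψ + ⟨V_0·A_1·I⟩_ψ + ⟨V'_1·I·B'_0⟩_ψ + ⟨V'_0·I·B'_1⟩_ψ. -/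

import Mathlib

open Matrix Kronecker BigOperators
open scoped ComplexOrder

noncomputable section

lemma kron_conjTranspose {m n p q : Type*} (A : Matrix m n ℂ) (B : Matrix p q ℂ) :
    (A ⊗ₖ B)ᴴ = Aᴴ ⊗ₖ Bᴴ := by
  ext ⟨i, j⟩ ⟨k, l⟩
  simp [conjTranspose_apply, kroneckerMap_apply, mul_comm]

lemma kron_psd {m p : Type*} [Fintype m] [Fintype p] [DecidableEq m] [DecidableEq p]
    {A : Matrix m m ℂ} {B : Matrix p p ℂ}
    (hA : A.PosSemidef) (hB : B.PosSemidef) : (A ⊗ₖ B).PosSemidef := by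
  exact hA.kronecker hB

/-- ⟨ψ, (V ⊗ A ⊗ B) ψ⟩ as a real number. -/
def exval {dA dB : ℕ} (χ : Fin 2 × Fin dA × Fin dB → ℂ)
    (V : Matrix (Fin 2) (Fin 2) ℂ) (A : Matrix (Fin dA) (Fin dA) ℂ)
    (B : Matrix (Fin dB) (Fin dB) ℂ) : ℝ :=
  (star χ ⬝ᵥ (V ⊗ₖ (A ⊗ₖ B)).mulVec χ).re

lemma exval_nonneg {dA dB : ℕ} (χ : Fin 2 × Fin dA × Fin dB → ℂ)
    {V : Matrix (Fin 2) (Fin 2) ℂ} {A : Matrix (Fin dA) (Fin dA) ℂ}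
    {B : Matrix (Fin dB) (Fin dB) ℂ}
    (hV : V.PosSemidef) (hA : A.PosSemidef) (hB : B.PosSemidef) :
    0 ≤ exval χ V A B := by
  have h := (kron_psd hV (kron_psd hA hB)).dotProduct_mulVec_nonneg χ
  exact (Complex.le_def.mp h).1

lemma exval_add_left {dA dB : ℕ} (χ : Fin 2 × Fin dA × Fin dB → ℂ)
    (V W : Matrix (Fin 2) (Fin 2) ℂ) (A : Matrix (Fin dA) (Fin dA) ℂ)
    (B : Matrix (Fin dB) (Fin dB) ℂ) :
    exval χ (V + W) A B = exval χ V A B + exval χ W A B := by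
  simp [exval, add_kronecker, add_mulVec, dotProduct_add]

lemma exval_add_mid {dA dB : ℕ} (χ : Fin 2 × Fin dA × Fin dB → ℂ)
    (V : Matrix (Fin 2) (Fin 2) ℂ) (A A' : Matrix (Fin dA) (Fin dA) ℂ)
    (B : Matrix (Fin dB) (Fin dB) ℂ) :
    exval χ V (A + A') B = exval χ V A B + exval χ V A' B := by
  simp [exval, add_kronecker, kronecker_add, add_mulVec, dotProduct_add]

lemma exval_add_right {dA dB : ℕ} (χ : Fin 2 × Fin dA × Fin dB → ℂ)
    (V : Matrix (Fin 2) (Fin 2) ℂ) (A : Matrix (Fin dA) (Fin dA) ℂ)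
    (B B' : Matrix (Fin dB) (Fin dB) ℂ) :
    exval χ V A (B + B') = exval χ V A B + exval χ V A B' := by
  simp [exval, kronecker_add, add_mulVec, dotProduct_add]

theorem split_projectors_bound {dA dB : ℕ} (hdA : 1 ≤ dA) (hdB : 1 ≤ dB)
    (ψ : Fin 2 × Fin dA × Fin dB → ℂ) (hψ : ∑ i, ‖ψ i‖ ^ 2 = 1)
    (V V' : Fin 2 → Matrix (Fin 2) (Fin 2) ℂ)
    (hVproj : ∀ a, (V a)ᴴ = V a ∧ V a * V a = V a)
    (hV'proj : ∀ a, (V' a)ᴴ = V' a ∧ V' a * V' a = V' a)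
    (hVsum : V 0 + V 1 = 1) (hV'sum : V' 0 + V' 1 = 1)
    (A : Fin 2 → Matrix (Fin dA) (Fin dA) ℂ)
    (B' : Fin 2 → Matrix (Fin dB) (Fin dB) ℂ)
    (hA : ∀ a, (A a).PosSemidef) (hAle : (1 - (A 0 + A 1)).PosSemidef)
    (hB' : ∀ b, (B' b).PosSemidef) (hB'le : (1 - (B' 0 + B' 1)).PosSemidef) :
    2 * ∑ a : Fin 2, ∑ b : Fin 2, exval ψ 1 (A a) (B' b) ≤
      (∑ a : Fin 2, ∑ b : Fin 2, exval ψ (V a + V' b) (A a) (B' b)) +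
        exval ψ (V 1) (A 0) 1 + exval ψ (V 0) (A 1) 1 +
        exval ψ (V' 1) 1 (B' 0) + exval ψ (V' 0) 1 (B' 1) := by
  have hVpsd : ∀ a, (V a).PosSemidef := fun a => by
    have h := Matrix.posSemidef_conjTranspose_mul_self (V a)
    rwa [(hVproj a).1, (hVproj a).2] at h
  have hV'psd : ∀ a, (V' a).PosSemidef := fun a => by
    have h := Matrix.posSemidef_conjTranspose_mul_self (V' a)
    rwa [(hV'proj a).1, (hV'proj a).2] at h
  -- nonnegative remainder terms
  have n1 : 0 ≤ exval ψ (V 1) (A 0) (1 - (B' 0 + B' 1)) :=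
    exval_nonneg ψ (hVpsd 1) (hA 0) hB'le
  have n2 : 0 ≤ exval ψ (V 0) (A 1) (1 - (B' 0 + B' 1)) :=
    exval_nonneg ψ (hVpsd 0) (hA 1) hB'le
  have n3 : 0 ≤ exval ψ (V' 1) (1 - (A 0 + A 1)) (B' 0) :=
    exval_nonneg ψ (hV'psd 1) hAle (hB' 0)
  have n4 : 0 ≤ exval ψ (V' 0) (1 - (A 0 + A 1)) (B' 1) :=
    exval_nonneg ψ (hV'psd 0) hAle (hB' 1)
  -- decompositions of the identity
  have hBid : (1 : Matrix (Fin dB) (Fin dB) ℂ) = (B' 0 + B' 1) + (1 - (B' 0 + B' 1)) := by abel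
  have hAid : (1 : Matrix (Fin dA) (Fin dA) ℂ) = (A 0 + A 1) + (1 - (A 0 + A 1)) := by abel
  have hE1 : exval ψ (V 1) (A 0) 1 =
      exval ψ (V 1) (A 0) (B' 0) + exval ψ (V 1) (A 0) (B' 1)
        + exval ψ (V 1) (A 0) (1 - (B' 0 + B' 1)) := by
    conv_lhs => rw [hBid, exval_add_right, exval_add_right]
  have hE2 : exval ψ (V 0) (A 1) 1 =
      exval ψ (V 0) (A 1) (B' 0) + exval ψ (V 0) (A 1) (B' 1)
        + exval ψ (V 0) (A 1) (1 - (B' 0 + B' 1)) := by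
    conv_lhs => rw [hBid, exval_add_right, exval_add_right]
  have hE3 : exval ψ (V' 1) 1 (B' 0) =
      exval ψ (V' 1) (A 0) (B' 0) + exval ψ (V' 1) (A 1) (B' 0)
        + exval ψ (V' 1) (1 - (A 0 + A 1)) (B' 0) := by
    conv_lhs => rw [hAid, exval_add_mid, exval_add_mid]
  have hE4 : exval ψ (V' 0) 1 (B' 1) =
      exval ψ (V' 0) (A 0) (B' 1) + exval ψ (V' 0) (A 1) (B' 1)
        + exval ψ (V' 0) (1 - (A 0 + A 1)) (B' 1) := by
    conv_lhs => rw [hAid, exval_add_mid, exval_add_mid]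
  have hOne : ∀ c d : Fin 2, exval ψ 1 (A c) (B' d)
      = exval ψ (V 0) (A c) (B' d) + exval ψ (V 1) (A c) (B' d) := by
    intro c d; rw [← hVsum, exval_add_left]
  have hOne' : ∀ c d : Fin 2, exval ψ 1 (A c) (B' d)
      = exval ψ (V' 0) (A c) (B' d) + exval ψ (V' 1) (A c) (B' d) := by
    intro c d; rw [← hV'sum, exval_add_left]
  simp only [Fin.sum_univ_two]
  rw [exval_add_left, exval_add_left, exval_add_left, exval_add_left]
  linarith [hOne 0 0, hOne 0 1, hOne 1 0, hOne 1 1,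
    hOne' 0 0, hOne' 0 1, hOne' 1 0, hOne' 1 1]

end
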